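/- Let G be a cancellative semigroup, K a finite nonempty subset of G, F a finite subset of G, and ε > 0. If F is (K, ε/|K|)-invariant, i.e. |KF △ F| ≤ (ε/|K|)·|F|, then the K-core of F, defined as F_K = {g ∈ F : Kg ⊆ F}, satisfies |F_K| ≥ (1 - ε)·|F|. -/

import Mathlib

open scoped Classical Pointwise

/-- If a finite set `F` in a cancellative semigroup `G` is
`(K, ε/|K|)`-invariant, i.e. `|KF △ F| ≤ (ε/|K|)·|F|`, then the `K`-core of `F`
(the set of `g ∈ F` with `Kg ⊆ F`) has cardinality at least `(1-ε)·|F|`. -/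
theorem stmt0 {G : Type*} [Semigroup G] [IsCancelMul G]
    (K F : Finset G) (hK : K.Nonempty) (ε : ℝ) (hε : 0 < ε)
    (hinv : ((symmDiff (K * F) F).card : ℝ) ≤ ε / (K.card : ℝ) * (F.card : ℝ)) :
    (1 - ε) * (F.card : ℝ) ≤ ((F.filter fun g => ∀ k ∈ K, k * g ∈ F).card : ℝ) := by
  set D : Finset G := (K * F) \ F with hD
  have hDsub : D ⊆ symmDiff (K * F) F := by
    intro x hx
    simp only [Finset.mem_symmDiff]
    exact Or.inl (Finset.mem_sdiff.mp hx |> fun h => ⟨h.1, h.2⟩)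
  -- bad set
  have hbadsub : (F.filter fun g => ¬ ∀ k ∈ K, k * g ∈ F) ⊆
      K.biUnion (fun k => F.filter fun g => k * g ∉ F) := by
    intro g hg
    simp only [Finset.mem_filter, not_forall] at hg
    obtain ⟨hgF, k, hk, hkg⟩ := hg
    exact Finset.mem_biUnion.mpr ⟨k, hk, Finset.mem_filter.mpr ⟨hgF, hkg⟩⟩
  have hcard1 : ∀ k ∈ K, (F.filter fun g => k * g ∉ F).card ≤ D.card := by
    intro k hk
    apply Finset.card_le_card_of_injOn (fun g => k * g)
    · intro g hg
      simp only [Finset.mem_coe, Finset.mem_filter] at hg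
      exact Finset.mem_sdiff.mpr ⟨Finset.mul_mem_mul hk hg.1, hg.2⟩
    · intro a _ b _ hab
      exact mul_left_cancel hab
  have hbad : (F.filter fun g => ¬ ∀ k ∈ K, k * g ∈ F).card ≤ K.card * D.card := by
    calc (F.filter fun g => ¬ ∀ k ∈ K, k * g ∈ F).card
        ≤ (K.biUnion (fun k => F.filter fun g => k * g ∉ F)).card :=
          Finset.card_le_card hbadsub
      _ ≤ ∑ k ∈ K, (F.filter fun g => k * g ∉ F).card := Finset.card_biUnion_le
      _ ≤ ∑ _k ∈ K, D.card := Finset.sum_le_sum hcard1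
      _ = K.card * D.card := by rw [Finset.sum_const, smul_eq_mul]
  have hsplit : (F.filter fun g => ∀ k ∈ K, k * g ∈ F).card
      + (F.filter fun g => ¬ ∀ k ∈ K, k * g ∈ F).card = F.card :=
    Finset.card_filter_add_card_filter_not _
  have hKpos : (0:ℝ) < K.card := by exact_mod_cast Finset.card_pos.mpr hK
  have hDle : (D.card : ℝ) ≤ ε / K.card * F.card :=
    le_trans (by exact_mod_cast Finset.card_le_card hDsub) hinv
  have hbadR : ((F.filter fun g => ¬ ∀ k ∈ K, k * g ∈ F).card : ℝ) ≤ ε * F.card := by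
    calc ((F.filter fun g => ¬ ∀ k ∈ K, k * g ∈ F).card : ℝ)
        ≤ (K.card : ℝ) * D.card := by exact_mod_cast hbad
      _ ≤ (K.card : ℝ) * (ε / K.card * F.card) := by
          apply mul_le_mul_of_nonneg_left hDle hKpos.le
      _ = ε * F.card := by field_simp
  have := hsplit
  have h2 : ((F.filter fun g => ∀ k ∈ K, k * g ∈ F).card : ℝ)
      = (F.card : ℝ) - (F.filter fun g => ¬ ∀ k ∈ K, k * g ∈ F).card := by
    have : ((F.filter fun g => ∀ k ∈ K, k * g ∈ F).card : ℝ)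
        + (F.filter fun g => ¬ ∀ k ∈ K, k * g ∈ F).card = F.card := by
      exact_mod_cast hsplit
    linarith
  rw [h2]
  nlinarith
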